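/- Let n ≥ 2, let j ∈ [n], let r := j + 1 if j < n and r := 1 if j = n, and let l ∈ {2, …, n}. Let y be a permutation of [n] with black(σ^r, y) = 0, and let σ^{j,l} := (σ^j(1), …, σ^j(l−1), σ^r(1), σ^r(l+1), …, σ^r(n)). Then the number of positions i ≤ l−1 with σ^j(i) = y(i) equals black(σ^{j,l}, y) if y(l) ≠ σ^r(1), and equals black(σ^{j,l}, y) − 1 if y(l) = σ^r(1). -/

import Mathlib

/-- `black w x` is the number of positions where the codes `w` and `x` coincide. -/
def black {n k : ℕ} (w x : Fin n → Fin k) : ℕ :=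
  (Finset.univ.filter fun i => w i = x i).card

/-- The cyclic shift codes: `cyc j` is the `j`-th circular right shift of the identity
(0-indexed: `cyc 0` is the identity). -/
def cyc {n : ℕ} (j : Fin n) : Fin n → Fin n := fun i => i - j

/-- The cyclic successor: the index `r` with `r = j + 1` if `j < n` and `r = 1` if `j = n`
(0-indexed). -/
def nxt {n : ℕ} (j : Fin n) : Fin n :=
  if h : (j : ℕ) + 1 < n then ⟨(j : ℕ) + 1, h⟩ else ⟨0, j.pos⟩

/-- The code `σ^{j,l}`: its entries at positions `< l` are those of `σ^j = cyc j`,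
its entry at position `l` is the first entry of `σ^r = cyc (nxt j)`,
and its entries at positions `> l` are those of `σ^r`. (All 0-indexed.) -/
def code5 {n : ℕ} (j l : Fin n) : Fin n → Fin n := fun i =>
  if i < l then cyc j i else if i = l then cyc (nxt j) ⟨0, j.pos⟩ else cyc (nxt j) i

theorem stmt6 (n : ℕ) (hn : 2 ≤ n) (j l : Fin n) (hl : 1 ≤ (l : ℕ))
    (y : Equiv.Perm (Fin n)) (hr : black (cyc (nxt j)) ⇑y = 0) :
    (y l ≠ cyc (nxt j) ⟨0, j.pos⟩ →
      (Finset.univ.filter fun i => i < l ∧ cyc j i = y i).card = black (code5 j l) ⇑y) ∧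
    (y l = cyc (nxt j) ⟨0, j.pos⟩ →
      (Finset.univ.filter fun i => i < l ∧ cyc j i = y i).card = black (code5 j l) ⇑y - 1) := by
  have hne : ∀ i : Fin n, cyc (nxt j) i ≠ y i := by
    intro i hi
    have h0 : (Finset.univ.filter fun i => cyc (nxt j) i = y i) = ∅ :=
      Finset.card_eq_zero.mp hr
    have : i ∈ (Finset.univ.filter fun i => cyc (nxt j) i = y i) := by
      simp [hi]
    rw [h0] at this
    exact absurd this (Finset.notMem_empty i)
  have hlS : l ∉ (Finset.univ.filter fun i => i < l ∧ cyc j i = y i) := by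
    simp
  constructor
  · intro h
    have hset : (Finset.univ.filter fun i => code5 j l i = y i) =
        (Finset.univ.filter fun i => i < l ∧ cyc j i = y i) := by
      ext i
      simp only [Finset.mem_filter, Finset.mem_univ, true_and]; simp only [code5]
      rcases lt_trichotomy i l with hil | hil | hil
      · simp [hil]
      · subst hil
        simp only [lt_irrefl, if_false, if_pos rfl]
        constructor
        · intro h'; exact absurd h'.symm h
        · rintro ⟨h', _⟩; exact h'.elim
      · have h1 : ¬ i < l := not_lt.mpr hil.le
        have h2 : i ≠ l := hil.ne'
        simp only [h1, if_false, h2]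
        constructor
        · intro h'; exact absurd h' (hne i)
        · rintro ⟨h', _⟩; exact h'.elim
    rw [black, hset]
  · intro h
    have hset : (Finset.univ.filter fun i => code5 j l i = y i) =
        insert l (Finset.univ.filter fun i => i < l ∧ cyc j i = y i) := by
      ext i
      simp only [Finset.mem_filter, Finset.mem_univ, true_and, Finset.mem_insert]; simp only [code5]
      rcases lt_trichotomy i l with hil | hil | hil
      · simp [hil, hil.ne]
      · subst hil
        simp [lt_irrefl, h]
      · have h1 : ¬ i < l := not_lt.mpr hil.le
        have h2 : i ≠ l := hil.ne'
        simp only [h1, if_false, h2]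
        constructor
        · intro h'; exact absurd h' (hne i)
        · rintro (h' | ⟨h', _⟩)
          · exact h'.elim
          · exact h'.elim
    rw [black, hset, Finset.card_insert_of_notMem hlS]
    simp
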